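/- For every r > 0 there exists a bounded continuous function g : ℝ² → ℂ such that (i) for every x ∈ ℝ² the autocorrelation limit η(x) = lim_{R→∞} (1/(πR²)) ∫_{B_R} g(y) · conj(g(y − x)) dy exists, and (ii) for every Schwartz function φ : ℝ² → ℂ, ∫_{ℝ²} η(x) · (𝓕φ)(x) dx = ∫ φ dμ_r, where μ_r is the uniform probability measure on the circle of radius r; i.e., the diffraction of g is uniformly distributed and concentrated on a single circle. -/

import Mathlib

open MeasureTheory Filter
open scoped Topology FourierTransform

open Metric Set
open scoped RealInnerProductSpace Real

noncomputable section

namespace Strungaru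

abbrev E2 : Type := EuclideanSpace ℝ (Fin 2)

def e2 : ℂ ≃ₗᵢ[ℝ] E2 := Complex.orthonormalBasisOneI.repr

lemma norm_e2 (z : ℂ) : ‖e2 z‖ = ‖z‖ := by
  rw [e2.norm_map]

/-- Polar coordinates for integrals over `E2`. -/
lemma integral_polar {V : Type*} [NormedAddCommGroup V] [NormedSpace ℝ V] (f : E2 → V) :
    (∫ p in polarCoord.target, p.1 • f (e2 (Complex.polarCoord.symm p))) = ∫ y, f y := by
  rw [← (e2.measurePreserving.integral_comp e2.toHomeomorph.measurableEmbedding f),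
    ← Complex.integral_comp_polarCoord_symm (fun z => f (e2 z))]

/-- Polar coordinates for integrals over closed balls in `E2`. -/
lemma integral_polar_ball {V : Type*} [NormedAddCommGroup V] [NormedSpace ℝ V] (f : E2 → V)
    (R : ℝ) :
    (∫ y in closedBall (0 : E2) R, f y)
      = ∫ p in Ioc 0 R ×ˢ Ioo (-π) π, p.1 • f (e2 (Complex.polarCoord.symm p)) := by
  rw [← integral_indicator (measurableSet_closedBall),
    ← integral_polar (fun y => (closedBall (0:E2) R).indicator f y)]
  rw [← integral_indicator (by exact polarCoord.open_target.measurableSet)]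
  rw [← integral_indicator ((measurableSet_Ioc).prod measurableSet_Ioo)]
  congr 1
  ext p
  by_cases hp : p ∈ polarCoord.target
  · have hp1 : 0 < p.1 := by
      have := hp.1
      simpa [polarCoord_target] using this
    have hnorm : ‖e2 (Complex.polarCoord.symm p)‖ = p.1 := by
      rw [norm_e2, Complex.norm_polarCoord_symm, abs_of_pos hp1]
    have hmem : e2 (Complex.polarCoord.symm p) ∈ closedBall (0 : E2) R ↔ p.1 ≤ R := by
      rw [mem_closedBall, dist_zero_right, hnorm]
    by_cases hR : p.1 ≤ R
    · have hmem2 : p ∈ Ioc (0:ℝ) R ×ˢ Ioo (-π) π := by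
        refine ⟨⟨hp1, hR⟩, ?_⟩
        have := hp.2
        simpa [polarCoord_target] using this
      rw [indicator_of_mem hp, indicator_of_mem hmem2, indicator_of_mem (hmem.mpr hR)]
    · have hmem2 : p ∉ Ioc (0:ℝ) R ×ˢ Ioo (-π) π := fun h => hR h.1.2
      rw [indicator_of_mem hp, indicator_of_notMem hmem2,
        indicator_of_notMem (fun h => hR (hmem.mp h)), smul_zero]
  · have hmem2 : p ∉ Ioc (0:ℝ) R ×ˢ Ioo (-π) π := by
      intro h
      exact hp (by
        rw [polarCoord_target]
        exact ⟨h.1.1, h.2⟩)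
    rw [indicator_of_notMem hp, indicator_of_notMem hmem2]

end Strungaru

section B
namespace Strungaru

lemma expI_sub_le (a b : ℝ) :
    ‖Complex.exp (a * Complex.I) - Complex.exp (b * Complex.I)‖ ≤ |a - b| := by
  have key : ∀ t : ℝ, ‖Complex.exp (t * Complex.I) - 1‖ ≤ |t| := by
    intro t
    have h1 : Complex.exp (t * Complex.I) - 1
        = Complex.ofReal (Real.cos t - 1) + Complex.ofReal (Real.sin t) * Complex.I := by
      rw [Complex.exp_mul_I]; push_cast; ring
    have h2 : ‖Complex.exp (t * Complex.I) - 1‖ ^ 2 = (Real.cos t - 1)^2 + (Real.sin t)^2 := by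
      rw [h1, Complex.sq_norm, Complex.normSq_add_mul_I]
    have h3 : (Real.cos t - 1)^2 + (Real.sin t)^2 = 2 - 2 * Real.cos t := by
      have := Real.sin_sq_add_cos_sq t; nlinarith
    have h4 : 2 - 2 * Real.cos t = 4 * Real.sin (t/2) ^ 2 := by
      have h5 := Real.sin_sq_eq_half_sub (t/2)
      have h6 : 2*(t/2) = t := by ring
      rw [h6] at h5
      nlinarith
    have h5 : Real.sin (t/2)^2 ≤ (t/2)^2 := Real.sin_sq_le_sq
    have h6 : ‖Complex.exp (t * Complex.I) - 1‖ ^ 2 ≤ t^2 := by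
      rw [h2, h3, h4]; nlinarith
    nlinarith [norm_nonneg (Complex.exp (t * Complex.I) - 1), abs_nonneg t, _root_.sq_abs t]
  have h1 : Complex.exp ((a:ℝ) * Complex.I) - Complex.exp ((b:ℝ) * Complex.I)
      = Complex.exp ((b:ℝ) * Complex.I) * (Complex.exp (((a - b : ℝ)) * Complex.I) - 1) := by
    rw [mul_sub, mul_one, ← Complex.exp_add]
    congr 2
    push_cast; ring
  rw [h1, norm_mul, Complex.norm_exp_ofReal_mul_I, one_mul]
  exact key (a - b)

def gfun (r : ℝ) : E2 → ℂ := fun y => Complex.exp ((2*π*r*‖y‖ : ℝ) * Complex.I)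

lemma gfun_cont (r : ℝ) : Continuous (gfun r) := by
  apply Complex.continuous_exp.comp
  exact (Complex.continuous_ofReal.comp (continuous_const.mul continuous_norm)).mul
    continuous_const

lemma gfun_norm (r : ℝ) (y : E2) : ‖gfun r y‖ = 1 := Complex.norm_exp_ofReal_mul_I _

def mker (r : ℝ) (x : E2) (t : ℝ) : ℂ :=
  Complex.exp ((2*π*(inner ℝ x (e2 ((r:ℝ) • Complex.exp ((t:ℝ) * Complex.I))) : ℝ) : ℝ)
    * Complex.I)

lemma mker_norm (r : ℝ) (x : E2) (t : ℝ) : ‖mker r x t‖ = 1 := Complex.norm_exp_ofReal_mul_I _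

lemma mker_cont (r : ℝ) (x : E2) : Continuous (mker r x) := by
  apply Complex.continuous_exp.comp
  refine Continuous.mul ?_ continuous_const
  apply Complex.continuous_ofReal.comp
  refine Continuous.mul continuous_const ?_
  refine Continuous.inner continuous_const (e2.continuous.comp ?_)
  exact (continuous_const (y := (r:ℝ))).smul (Complex.continuous_exp.comp
    (Complex.continuous_ofReal.mul continuous_const))

def eta (r : ℝ) (x : E2) : ℂ := (2*π)⁻¹ • ∫ θ in Ioo (-π) π, mker r x θ

end Strungaru
end B

section C
namespace Strungaru

def hfun (r : ℝ) (x : E2) : E2 → ℂ :=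
  fun y => Complex.exp ((2*π*r*((inner ℝ x y : ℝ)/‖y‖) : ℝ) * Complex.I)

lemma hfun_norm (r : ℝ) (x y : E2) : ‖hfun r x y‖ = 1 := Complex.norm_exp_ofReal_mul_I _

lemma hfun_meas (r : ℝ) (x : E2) : Measurable (hfun r x) := by
  apply Complex.measurable_exp.comp
  refine Measurable.mul ?_ measurable_const
  apply Complex.measurable_ofReal.comp
  refine Measurable.mul measurable_const ?_
  exact ((Continuous.inner continuous_const continuous_id).measurable).mul
    measurable_norm.inv

lemma polar_symm_smul (p : ℝ × ℝ) :
    Complex.polarCoord.symm p = p.1 • Complex.exp ((p.2 : ℝ) * Complex.I) := by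
  rw [Complex.polarCoord_symm_apply, Complex.exp_mul_I, Complex.real_smul]
  push_cast
  ring

lemma hfun_polar (r : ℝ) (x : E2) (p : ℝ × ℝ) (hp : 0 < p.1) :
    hfun r x (e2 (Complex.polarCoord.symm p)) = mker r x p.2 := by
  unfold hfun mker
  congr 2
  have hn : ‖e2 (Complex.exp ((p.2:ℝ) * Complex.I))‖ = 1 := by
    rw [norm_e2]
    exact Complex.norm_exp_ofReal_mul_I _
  rw [polar_symm_smul]
  rw [LinearIsometryEquiv.map_smul, LinearIsometryEquiv.map_smul]
  rw [real_inner_smul_right, real_inner_smul_right]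
  rw [norm_smul, hn, mul_one, Real.norm_eq_abs, abs_of_pos hp]
  field_simp

lemma volume_rect_lt_top (R : ℝ) : volume (Ioc (0:ℝ) R ×ˢ Ioo (-π) π) < ⊤ := by
  rw [Measure.volume_eq_prod, Measure.prod_prod, Real.volume_Ioc, Real.volume_Ioo]
  exact ENNReal.mul_lt_top ENNReal.ofReal_lt_top ENNReal.ofReal_lt_top

lemma integral_ball_hfun (r : ℝ) (x : E2) (R : ℝ) (hR : 0 < R) :
    (∫ y in closedBall (0:E2) R, hfun r x y) = (π * R^2 : ℝ) • eta r x := by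
  rw [integral_polar_ball]
  have hcongr : ∀ p ∈ Ioc (0:ℝ) R ×ˢ Ioo (-π) π,
      p.1 • hfun r x (e2 (Complex.polarCoord.symm p)) = p.1 • mker r x p.2 := by
    intro p hp
    rw [hfun_polar r x p hp.1.1]
  rw [setIntegral_congr_fun (by measurability) hcongr]
  have hint : IntegrableOn (fun p : ℝ × ℝ => p.1 • mker r x p.2)
      (Ioc (0:ℝ) R ×ˢ Ioo (-π) π) := by
    refine Integrable.mono' (g := fun _ => R)
      (integrableOn_const (C := R) (volume_rect_lt_top R).ne) ?_ ?_
    · exact ((continuous_fst.smul ((mker_cont r x).comp continuous_snd)).aestronglyMeasurable).restrict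
    · refine (ae_restrict_iff' (by measurability)).mpr (ae_of_all _ ?_)
      intro p hp
      rw [norm_smul, mker_norm, mul_one, Real.norm_eq_abs, abs_of_pos hp.1.1]
      exact hp.1.2
  rw [Measure.volume_eq_prod] at hint ⊢
  rw [setIntegral_prod _ hint]
  have : ∀ s : ℝ, (∫ θ in Ioo (-π) π, s • mker r x θ) = s • ∫ θ in Ioo (-π) π, mker r x θ := by
    intro s; exact integral_smul s _
  simp_rw [this]
  rw [integral_smul_const]
  have h1 : (∫ s in Ioc (0:ℝ) R, s) = R^2/2 := by
    rw [← intervalIntegral.integral_of_le hR.le, integral_id]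
    ring
  rw [h1]
  unfold eta
  rw [smul_smul]
  congr 1
  field_simp

lemma integral_ball_min_le (R : ℝ) (hR : 0 ≤ R) :
    (∫ y in closedBall (0:E2) R, min 1 ‖y‖⁻¹) ≤ 2*π*R := by
  rw [integral_polar_ball]
  have hmeas : Measurable (fun p : ℝ × ℝ => p.1 • min 1 ‖e2 (Complex.polarCoord.symm p)‖⁻¹) := by
    refine measurable_fst.smul (Measurable.min measurable_const ?_)
    have hc : Continuous (fun p : ℝ × ℝ => e2 (Complex.polarCoord.symm p)) := by
      have heq : (fun p : ℝ × ℝ => e2 (Complex.polarCoord.symm p))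
          = fun p : ℝ × ℝ => e2 (p.1 • Complex.exp ((p.2:ℝ) * Complex.I)) := by
        funext p; rw [polar_symm_smul]
      rw [heq]
      exact e2.continuous.comp (continuous_fst.smul (Complex.continuous_exp.comp
        ((Complex.continuous_ofReal.comp continuous_snd).mul continuous_const)))
    exact (continuous_norm.comp hc).measurable.inv
  have hintq : IntegrableOn (fun p : ℝ × ℝ => p.1 • min 1 ‖e2 (Complex.polarCoord.symm p)‖⁻¹)
      (Ioc (0:ℝ) R ×ˢ Ioo (-π) π) := by
    refine Integrable.mono' (g := fun _ => (1:ℝ))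
      (integrableOn_const (C := (1:ℝ)) (volume_rect_lt_top R).ne) ?_ ?_
    · exact hmeas.aestronglyMeasurable.restrict
    · refine (ae_restrict_iff' (by measurability)).mpr (ae_of_all _ ?_)
      intro p hp
      have hp1 : 0 < p.1 := hp.1.1
      have hnorm : ‖e2 (Complex.polarCoord.symm p)‖ = p.1 := by
        rw [norm_e2, Complex.norm_polarCoord_symm, abs_of_pos hp1]
      rw [Real.norm_eq_abs, hnorm, smul_eq_mul]
      rw [abs_of_nonneg (by positivity)]
      rcases le_total p.1 1 with h | h
      · calc p.1 * min 1 p.1⁻¹ ≤ p.1 * 1 := by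
              refine mul_le_mul_of_nonneg_left (min_le_left _ _) hp1.le
            _ ≤ 1 := by simpa using h
      · calc p.1 * min 1 p.1⁻¹ ≤ p.1 * p.1⁻¹ := by
              refine mul_le_mul_of_nonneg_left (min_le_right _ _) hp1.le
            _ = 1 := mul_inv_cancel₀ hp1.ne'
  have hb : ∀ p ∈ Ioc (0:ℝ) R ×ˢ Ioo (-π) π,
      p.1 • min 1 ‖e2 (Complex.polarCoord.symm p)‖⁻¹ ≤ 1 := by
    intro p hp
    have hp1 : 0 < p.1 := hp.1.1
    have hnorm : ‖e2 (Complex.polarCoord.symm p)‖ = p.1 := by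
      rw [norm_e2, Complex.norm_polarCoord_symm, abs_of_pos hp1]
    rw [hnorm, smul_eq_mul]
    rcases le_total p.1 1 with h | h
    · calc p.1 * min 1 p.1⁻¹ ≤ p.1 * 1 := by
            refine mul_le_mul_of_nonneg_left (min_le_left _ _) hp1.le
          _ ≤ 1 := by simpa using h
    · calc p.1 * min 1 p.1⁻¹ ≤ p.1 * p.1⁻¹ := by
            refine mul_le_mul_of_nonneg_left (min_le_right _ _) hp1.le
          _ = 1 := mul_inv_cancel₀ hp1.ne'
  calc (∫ p in Ioc (0:ℝ) R ×ˢ Ioo (-π) π, p.1 • min 1 ‖e2 (Complex.polarCoord.symm p)‖⁻¹)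
      ≤ ∫ _p in Ioc (0:ℝ) R ×ˢ Ioo (-π) π, (1:ℝ) := by
        refine setIntegral_mono_on hintq
          (integrableOn_const (C := (1:ℝ)) (volume_rect_lt_top R).ne)
          (by measurability) hb
    _ ≤ 2*π*R := by
        rw [setIntegral_const, smul_eq_mul, mul_one, measureReal_def]
        rw [Measure.volume_eq_prod, Measure.prod_prod, Real.volume_Ioc, Real.volume_Ioo]
        rw [← ENNReal.ofReal_mul (by linarith)]
        rw [ENNReal.toReal_ofReal (by nlinarith [Real.pi_pos])]
        ring_nf
        nlinarith [Real.pi_pos]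

end Strungaru
end C

section D
namespace Strungaru

lemma key_est (x y : E2) (hy : y ≠ 0) (hbig : 2*‖x‖ ≤ ‖y‖) :
    |(‖y‖ - ‖y - x‖) - (inner ℝ x y : ℝ)/‖y‖| ≤ ‖x‖^2 / ‖y‖ := by
  have hs : 0 < ‖y‖ := norm_pos_iff.mpr hy
  set s := ‖y‖ with hs'
  set A := ‖y - x‖ with hA'
  set t := (inner ℝ x y : ℝ)/s with ht'
  have hyx : (inner ℝ y x : ℝ) = t * s := by
    rw [real_inner_comm]; rw [ht']; field_simp
  have hA2 : A^2 = (s - t)^2 + (‖x‖^2 - t^2) := by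
    rw [hA', norm_sub_sq_real, hyx]
    ring
  have ht : |t| ≤ ‖x‖ := by
    rw [ht', abs_div, abs_of_pos hs, div_le_iff₀ hs]
    calc |(inner ℝ x y : ℝ)| ≤ ‖x‖ * ‖y‖ := abs_real_inner_le_norm x y
      _ = ‖x‖ * s := rfl
  have htt := abs_le.mp ht
  have hxs : ‖x‖ ≤ s/2 := by linarith
  have hst : s/2 ≤ s - t := by linarith
  have hA0 : 0 ≤ A := norm_nonneg _
  have hc0 : 0 ≤ ‖x‖^2 - t^2 := by nlinarith [abs_nonneg t, _root_.sq_abs t]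
  have hAge : s - t ≤ A := by nlinarith
  have h2 : (A - (s - t)) * s ≤ ‖x‖^2 := by
    nlinarith [mul_le_mul_of_nonneg_left (show s ≤ A + (s - t) by linarith)
      (show (0:ℝ) ≤ A - (s - t) by linarith), sq_nonneg t]
  have habs : |(s - A) - t| = A - (s - t) := by
    rw [abs_of_nonpos (by linarith)]; ring
  rw [habs, le_div_iff₀ hs]
  exact h2

lemma gfun_mul_conj (r : ℝ) (x y : E2) :
    gfun r y * (starRingEnd ℂ) (gfun r (y - x))
      = Complex.exp ((2*π*r*(‖y‖ - ‖y - x‖) : ℝ) * Complex.I) := by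
  unfold gfun
  rw [← Complex.exp_conj, ← Complex.exp_add]
  congr 1
  rw [map_mul, Complex.conj_ofReal, Complex.conj_I]
  push_cast; ring

lemma diff_bound (r : ℝ) (hr : 0 < r) (x y : E2) (hy : y ≠ 0) :
    ‖gfun r y * (starRingEnd ℂ) (gfun r (y - x)) - hfun r x y‖
      ≤ (2*π*r*‖x‖^2 + 2*(2*‖x‖+1)) * min 1 ‖y‖⁻¹ := by
  set K := 2*π*r*‖x‖^2 + 2*(2*‖x‖+1) with hK
  have hy0 : 0 < ‖y‖ := norm_pos_iff.mpr hy
  have hm : (0:ℝ) < 2*‖x‖+1 := by positivity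
  rcases le_or_gt (2*‖x‖+1) ‖y‖ with hc | hc
  · -- far away : use the key estimate
    have h1 : ‖y‖⁻¹ ≤ 1 := by
      rw [inv_le_one_iff₀]
      right; linarith [norm_nonneg x]
    have hmin : min 1 ‖y‖⁻¹ = ‖y‖⁻¹ := min_eq_right h1
    rw [gfun_mul_conj, hmin]
    unfold hfun
    calc ‖Complex.exp ((2*π*r*(‖y‖ - ‖y - x‖):ℝ) * Complex.I)
          - Complex.exp ((2*π*r*((inner ℝ x y : ℝ)/‖y‖):ℝ) * Complex.I)‖
        ≤ |2*π*r*(‖y‖ - ‖y - x‖) - 2*π*r*((inner ℝ x y : ℝ)/‖y‖)| := expI_sub_le _ _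
      _ = (2*π*r) * |(‖y‖ - ‖y - x‖) - (inner ℝ x y : ℝ)/‖y‖| := by
          rw [← mul_sub, abs_mul, abs_of_pos (show (0:ℝ) < 2*π*r by positivity)]
      _ ≤ (2*π*r) * (‖x‖^2/‖y‖) := by
          refine mul_le_mul_of_nonneg_left ?_ (by positivity)
          exact key_est x y hy (by linarith)
      _ = (2*π*r*‖x‖^2) * ‖y‖⁻¹ := by ring
      _ ≤ K * ‖y‖⁻¹ := by
          refine mul_le_mul_of_nonneg_right ?_ (by positivity)
          have h0 : (0:ℝ) ≤ 2*(2*‖x‖+1) := by positivity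
          rw [hK]; linarith
  · -- close : trivial bound by 2
    have hmin : (2*‖x‖+1)⁻¹ ≤ min 1 ‖y‖⁻¹ := by
      refine le_min ?_ ?_
      · rw [inv_le_one_iff₀]; right; linarith [norm_nonneg x]
      · exact inv_anti₀ hy0 hc.le
    have h2 : ‖gfun r y * (starRingEnd ℂ) (gfun r (y - x)) - hfun r x y‖ ≤ 2 := by
      refine (norm_sub_le _ _).trans ?_
      rw [norm_mul, gfun_norm, RCLike.norm_conj, gfun_norm, hfun_norm]
      norm_num
    refine h2.trans ?_
    calc (2:ℝ) = (2*(2*‖x‖+1)) * (2*‖x‖+1)⁻¹ := by field_simp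
      _ ≤ K * min 1 ‖y‖⁻¹ := by
          have h0 : (0:ℝ) ≤ 2*π*r*‖x‖^2 := by positivity
          refine mul_le_mul (by rw [hK]; linarith) hmin (by positivity) (by rw [hK]; positivity)

lemma integrableOn_ball_of_bound (f : E2 → ℂ) (hf : AEStronglyMeasurable f volume)
    (C : ℝ) (hC : ∀ y, ‖f y‖ ≤ C) (R : ℝ) :
    IntegrableOn f (closedBall (0:E2) R) := by
  refine Integrable.mono' (g := fun _ => C)
    (integrableOn_const (C := C) measure_closedBall_lt_top.ne) hf.restrict ?_
  exact ae_of_all _ hC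

end Strungaru
end D

section E
namespace Strungaru

lemma autocorr_cont (r : ℝ) (x : E2) :
    Continuous (fun y : E2 => gfun r y * (starRingEnd ℂ) (gfun r (y - x))) :=
  (gfun_cont r).mul (continuous_star.comp ((gfun_cont r).comp
    (continuous_id.sub continuous_const)))

lemma tendsto_main (r : ℝ) (hr : 0 < r) (x : E2) :
    Tendsto (fun R : ℝ =>
        (∫ y in closedBall (0 : E2) R, gfun r y * (starRingEnd ℂ) (gfun r (y - x))) /
          ((π * R ^ 2 : ℝ) : ℂ))
      atTop (𝓝 (eta r x)) := by
  set K := 2*π*r*‖x‖^2 + 2*(2*‖x‖+1) with hK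
  have hK0 : 0 < K := by positivity
  rw [← tendsto_sub_nhds_zero_iff]
  have key : ∀ R : ℝ, 1 ≤ R →
      ‖(∫ y in closedBall (0 : E2) R, gfun r y * (starRingEnd ℂ) (gfun r (y - x))) /
          ((π * R ^ 2 : ℝ) : ℂ) - eta r x‖ ≤ 2*K/R := by
    intro R hR1
    have hR : 0 < R := lt_of_lt_of_le one_pos hR1
    have hFi : IntegrableOn (fun y : E2 => gfun r y * (starRingEnd ℂ) (gfun r (y - x)))
        (closedBall (0:E2) R) := by
      refine integrableOn_ball_of_bound _ (autocorr_cont r x).aestronglyMeasurable 1 ?_ R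
      intro y
      rw [norm_mul, gfun_norm, RCLike.norm_conj, gfun_norm, mul_one]
    have hhi : IntegrableOn (hfun r x) (closedBall (0:E2) R) := by
      refine integrableOn_ball_of_bound _ (hfun_meas r x).aestronglyMeasurable 1 ?_ R
      intro y; rw [hfun_norm]
    have hc0 : (0:ℝ) < π * R ^ 2 := by positivity
    have hc : ((π * R ^ 2 : ℝ) : ℂ) ≠ 0 := by
      exact_mod_cast hc0.ne'
    have heq : (∫ y in closedBall (0 : E2) R, gfun r y * (starRingEnd ℂ) (gfun r (y - x))) /
          ((π * R ^ 2 : ℝ) : ℂ) - eta r x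
        = (∫ y in closedBall (0 : E2) R,
            (gfun r y * (starRingEnd ℂ) (gfun r (y - x)) - hfun r x y)) /
          ((π * R ^ 2 : ℝ) : ℂ) := by
      rw [integral_sub hFi hhi, integral_ball_hfun r x R hR, Complex.real_smul, sub_div,
        mul_div_cancel_left₀ _ hc]
    rw [heq, norm_div, Complex.norm_real, Real.norm_eq_abs, abs_of_pos hc0]
    have hae : ∀ᵐ y ∂(volume.restrict (closedBall (0:E2) R)), y ≠ (0:E2) := by
      refine ae_restrict_of_ae ?_
      rw [ae_iff]
      have : {y : E2 | ¬ y ≠ 0} = {(0:E2)} := by ext z; simp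
      rw [this]
      exact measure_singleton _
    have hmini : IntegrableOn (fun y : E2 => K * min 1 ‖y‖⁻¹) (closedBall (0:E2) R) := by
      refine Integrable.mono' (g := fun _ => K)
        (integrableOn_const (C := K) measure_closedBall_lt_top.ne) ?_ ?_
      · refine ((measurable_const.mul ?_).aestronglyMeasurable).restrict
        exact Measurable.min measurable_const measurable_norm.inv
      · refine ae_of_all _ fun y => ?_
        rw [Real.norm_eq_abs, abs_of_nonneg (by positivity)]
        nlinarith [min_le_left (1:ℝ) ‖y‖⁻¹, le_min_iff.mpr ⟨zero_le_one,
          inv_nonneg.mpr (norm_nonneg y)⟩]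
    have hnorm : ‖∫ y in closedBall (0 : E2) R,
          (gfun r y * (starRingEnd ℂ) (gfun r (y - x)) - hfun r x y)‖
        ≤ ∫ y in closedBall (0:E2) R, K * min 1 ‖y‖⁻¹ := by
      refine norm_integral_le_of_norm_le hmini ?_
      filter_upwards [hae] with y hy
      exact diff_bound r hr x y hy
    have hival : (∫ y in closedBall (0:E2) R, K * min 1 ‖y‖⁻¹) ≤ K * (2*π*R) := by
      rw [integral_const_mul]
      exact mul_le_mul_of_nonneg_left (integral_ball_min_le R hR.le) hK0.le
    calc ‖∫ y in closedBall (0 : E2) R,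
            (gfun r y * (starRingEnd ℂ) (gfun r (y - x)) - hfun r x y)‖ / (π * R^2)
        ≤ (K * (2*π*R)) / (π * R^2) := by
          exact (div_le_div_iff_of_pos_right hc0).mpr (hnorm.trans hival)
      _ = 2*K/R := by
          field_simp
  have hg0 : Tendsto (fun R : ℝ => 2*K/R) atTop (𝓝 0) := by
    simpa using (tendsto_const_nhds (x := (2*K : ℝ))).div_atTop tendsto_id
  refine squeeze_zero_norm' (a := fun R : ℝ => 2*K/R) ?_ hg0
  filter_upwards [eventually_ge_atTop (1:ℝ)] with R hR
  exact key R hR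

end Strungaru
end E

section F
namespace Strungaru

def rotE (θ : ℝ) : E2 ≃ₗᵢ[ℝ] E2 := (e2.symm.trans (rotation (Circle.exp θ))).trans e2

lemma rotE_apply (θ : ℝ) (z : E2) :
    rotE θ z = e2 (Complex.exp ((θ:ℝ) * Complex.I) * e2.symm z) := by
  simp [rotE, rotation_apply, Circle.coe_exp]

lemma mker_periodic (r : ℝ) (x : E2) : Function.Periodic (mker r x) (2*π) := by
  intro t
  unfold mker
  have h : Complex.exp (((t+2*π:ℝ)) * Complex.I) = Complex.exp ((t:ℝ) * Complex.I) := by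
    rw [show ((t+2*π:ℝ):ℂ) * Complex.I = (t:ℝ) * Complex.I + 2*π*Complex.I by push_cast; ring,
      Complex.exp_add, Complex.exp_two_pi_mul_I, mul_one]
  rw [h]

/-- The rotational average identity: for `‖z‖ = r`,
`∫ θ in Ioo (-π) π, G (rotE θ z) = ∫ θ in Ioo (-π) π, mker r x θ`. -/
lemma rotational_average (r : ℝ) (x z : E2) (hz : ‖z‖ = r) :
    (∫ θ in Ioo (-π) π,
        Complex.exp ((2*π*(inner ℝ x (rotE θ z) : ℝ) : ℝ) * Complex.I))
      = ∫ θ in Ioo (-π) π, mker r x θ := by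
  set w := e2.symm z with hw'
  have habs : ‖w‖ = r := by
    rw [e2.symm.norm_map, hz]
  have hw : ((r:ℝ):ℂ) * Complex.exp ((w.arg : ℝ) * Complex.I) = w := by
    rw [← habs]
    exact Complex.norm_mul_exp_arg_mul_I w
  set β := w.arg with hβ'
  have hpt : ∀ θ : ℝ, Complex.exp ((2*π*(inner ℝ x (rotE θ z) : ℝ) : ℝ) * Complex.I)
      = mker r x (θ + β) := by
    intro θ
    have hc : Complex.exp ((θ:ℝ) * Complex.I) * w
        = (r:ℝ) • Complex.exp (((θ+β):ℝ) * Complex.I) := by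
      rw [Complex.real_smul, ← hw, mul_left_comm]
      congr 1
      rw [← Complex.exp_add]
      congr 1
      push_cast; ring
    have harg : rotE θ z = e2 ((r:ℝ) • Complex.exp (((θ+β):ℝ) * Complex.I)) := by
      rw [rotE_apply, ← hw', hc]
    unfold mker
    rw [harg]
  simp_rw [hpt]
  rw [← integral_Ioc_eq_integral_Ioo, ← intervalIntegral.integral_of_le (by linarith [Real.pi_pos]),
    ← integral_Ioc_eq_integral_Ioo, ← intervalIntegral.integral_of_le (by linarith [Real.pi_pos])]
  rw [intervalIntegral.integral_comp_add_right (fun t => mker r x t) β]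
  have h1 : ∫ t in (-π+β)..(-π+β+2*π), mker r x t = ∫ t in (-π)..(-π+2*π), mker r x t :=
    (mker_periodic r x).intervalIntegral_add_eq (-π+β) (-π)
  have h2 : -π + β + 2*π = π + β := by ring
  have h3 : -π + 2*π = π := by ring
  rw [h2, h3] at h1
  exact h1

end Strungaru
end F

section G
namespace Strungaru

lemma contG (x : E2) : Continuous (fun z : E2 =>
    Complex.exp ((2*π*(inner ℝ x z : ℝ) : ℝ) * Complex.I)) := by
  apply Complex.continuous_exp.comp
  refine Continuous.mul ?_ continuous_const
  exact Complex.continuous_ofReal.comp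
    (continuous_const.mul (Continuous.inner continuous_const continuous_id))

lemma contG2 (x : E2) : Continuous (fun p : ℝ × E2 =>
    Complex.exp ((2*π*(inner ℝ x (rotE p.1 p.2) : ℝ) : ℝ) * Complex.I)) := by
  have hrot : Continuous (fun p : ℝ × E2 => rotE p.1 p.2) := by
    have heq : (fun p : ℝ × E2 => rotE p.1 p.2)
        = fun p : ℝ × E2 => e2 (Complex.exp ((p.1:ℝ) * Complex.I) * e2.symm p.2) := by
      funext p; rw [rotE_apply]
    rw [heq]
    refine e2.continuous.comp (Continuous.mul ?_ (e2.symm.continuous.comp continuous_snd))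
    exact Complex.continuous_exp.comp
      ((Complex.continuous_ofReal.comp continuous_fst).mul continuous_const)
  apply Complex.continuous_exp.comp
  refine Continuous.mul ?_ continuous_const
  exact Complex.continuous_ofReal.comp
    (continuous_const.mul (Continuous.inner continuous_const hrot))

lemma eta_eq_fourier (r : ℝ) (hr : 0 < r) (μ : Measure E2) [IsProbabilityMeasure μ]
    (hsupp : μ (Metric.sphere (0 : E2) r)ᶜ = 0)
    (hrot : ∀ T : E2 ≃ₗᵢ[ℝ] E2, Measure.map T μ = μ) (x : E2) :
    eta r x = ∫ z, Complex.exp ((2*π*(inner ℝ x z : ℝ) : ℝ) * Complex.I) ∂μ := by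
  set G : E2 → ℂ := fun z => Complex.exp ((2*π*(inner ℝ x z : ℝ) : ℝ) * Complex.I) with hG'
  set J : ℂ := ∫ z, G z ∂μ with hJ'
  have hGc : Continuous G := contG x
  have hπ : (0:ℝ) < π := Real.pi_pos
  have hJconst : ∀ θ : ℝ, (∫ z, G (rotE θ z) ∂μ) = J := by
    intro θ
    rw [hJ']
    have h1 : ∫ z, G z ∂μ = ∫ z, G z ∂(Measure.map (rotE θ) μ) := by rw [hrot]
    rw [h1, integral_map ((rotE θ).continuous.measurable.aemeasurable)
      (by rw [hrot]; exact hGc.aestronglyMeasurable)]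
  haveI hfin : IsFiniteMeasure (volume.restrict (Ioo (-π) π)) := by
    constructor
    rw [Measure.restrict_apply_univ, Real.volume_Ioo]
    exact ENNReal.ofReal_lt_top
  have hint : Integrable (Function.uncurry fun θ (z : E2) => G (rotE θ z))
      ((volume.restrict (Ioo (-π) π)).prod μ) := by
    refine Integrable.mono' (g := fun _ => 1) (integrable_const 1) ?_ ?_
    · exact ((contG2 x).aestronglyMeasurable)
    · refine ae_of_all _ fun p => ?_
      exact le_of_eq (Complex.norm_exp_ofReal_mul_I _)
  have h1 : (∫ θ in Ioo (-π) π, (∫ z, G (rotE θ z) ∂μ)) = (2*π) • J := by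
    rw [setIntegral_congr_fun measurableSet_Ioo (fun θ _ => hJconst θ), setIntegral_const, measureReal_def,
      Real.volume_Ioo, ENNReal.toReal_ofReal (by linarith), sub_neg_eq_add, two_mul]
  have h2 : (∫ θ in Ioo (-π) π, (∫ z, G (rotE θ z) ∂μ))
      = ∫ z, (∫ θ in Ioo (-π) π, G (rotE θ z)) ∂μ := integral_integral_swap hint
  have hae : ∀ᵐ z ∂μ, ‖z‖ = r := by
    have h := hsupp
    have : ∀ᵐ z ∂μ, z ∈ Metric.sphere (0:E2) r := by
      rw [ae_iff]
      convert h using 2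
      rfl
    filter_upwards [this] with z hz
    rwa [mem_sphere_zero_iff_norm] at hz
  have h3 : ∫ z, (∫ θ in Ioo (-π) π, G (rotE θ z)) ∂μ
      = ∫ _z, (∫ θ in Ioo (-π) π, mker r x θ) ∂μ := by
    refine integral_congr_ae ?_
    filter_upwards [hae] with z hz
    exact rotational_average r x z hz
  have h4 : (∫ _z, (∫ θ in Ioo (-π) π, mker r x θ) ∂μ) = ∫ θ in Ioo (-π) π, mker r x θ := by
    rw [integral_const, probReal_univ]
    simp
  have h5 : (2*π) • J = ∫ θ in Ioo (-π) π, mker r x θ := by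
    rw [← h1, h2, h3, h4]
  have h6 : eta r x = (2*π)⁻¹ • ((2*π) • J) := by
    rw [h5]; rfl
  rw [h6, smul_smul, inv_mul_cancel₀ (by positivity), one_smul, hJ']

end Strungaru
end G

section H
namespace Strungaru

lemma fourier_pairing (r : ℝ) (hr : 0 < r) (μ : Measure E2) [IsProbabilityMeasure μ]
    (hsupp : μ (Metric.sphere (0 : E2) r)ᶜ = 0)
    (hrot : ∀ T : E2 ≃ₗᵢ[ℝ] E2, Measure.map T μ = μ)
    (φ : SchwartzMap E2 ℂ) :
    ∫ x, eta r x * 𝓕 (⇑φ) x = ∫ y, φ y ∂μ := by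
  set ψ := FourierTransform.fourierCLE ℂ (SchwartzMap E2 ℂ) φ with hψ'
  have hψ : ⇑ψ = 𝓕 ⇑φ := by rw [hψ']; rfl
  have hFi : Integrable (𝓕 ⇑φ) := by rw [← hψ]; exact ψ.integrable
  have hFc : Continuous (𝓕 ⇑φ) := by rw [← hψ]; exact ψ.continuous
  simp_rw [eta_eq_fourier r hr μ hsupp hrot]
  have hmul : ∀ x : E2,
      (∫ z, Complex.exp ((2*π*(inner ℝ x z : ℝ) : ℝ) * Complex.I) ∂μ) * 𝓕 (⇑φ) x
      = ∫ z, Complex.exp ((2*π*(inner ℝ x z : ℝ) : ℝ) * Complex.I) * 𝓕 (⇑φ) x ∂μ := fun x =>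
    (integral_mul_const _ _).symm
  simp_rw [hmul]
  have hint : Integrable (Function.uncurry fun (x : E2) (z : E2) =>
      Complex.exp ((2*π*(inner ℝ x z : ℝ) : ℝ) * Complex.I) * 𝓕 (⇑φ) x) (volume.prod μ) := by
    have hb : Integrable (fun p : E2 × E2 => ‖𝓕 (⇑φ) p.1‖ * 1) (volume.prod μ) :=
      Integrable.mul_prod hFi.norm (integrable_const 1)
    refine Integrable.mono' (g := fun p : E2 × E2 => ‖𝓕 (⇑φ) p.1‖ * 1) hb ?_ (ae_of_all _ ?_)
    · refine Continuous.aestronglyMeasurable ?_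
      refine Continuous.mul ?_ (hFc.comp continuous_fst)
      apply Complex.continuous_exp.comp
      refine Continuous.mul ?_ continuous_const
      exact Complex.continuous_ofReal.comp (continuous_const.mul continuous_inner)
    · intro p
      simp only [Function.uncurry]
      rw [norm_mul, Complex.norm_exp_ofReal_mul_I, one_mul, mul_one]
  rw [integral_integral_swap hint]
  have hinv : ∀ z : E2,
      (∫ x, Complex.exp ((2*π*(inner ℝ x z : ℝ) : ℝ) * Complex.I) * 𝓕 (⇑φ) x) = φ z := by
    intro z
    have h := MeasureTheory.Integrable.fourierInv_fourier_eq (φ.integrable (μ := volume)) (v := z) hFi (φ.continuous.continuousAt)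
    rw [← h, Real.fourierInv_eq']
    simp_rw [smul_eq_mul]
  simp_rw [hinv]

end Strungaru
end H

/-- Affirmative answer to Strungaru's question in the plane: for every `r > 0` there is a
bounded continuous function `g : ℝ² → ℂ` whose natural autocorrelation `η` exists
pointwise and whose diffraction (the distributional Fourier transform of `η`) is the
uniform probability measure `μ_r` on the circle of radius `r`. -/
theorem exists_function_with_diffraction_on_circle
    (r : ℝ) (hr : 0 < r)
    (μ : Measure (EuclideanSpace ℝ (Fin 2))) [IsProbabilityMeasure μ]
    (hsupp : μ (Metric.sphere (0 : EuclideanSpace ℝ (Fin 2)) r)ᶜ = 0)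
    (hrot : ∀ T : EuclideanSpace ℝ (Fin 2) ≃ₗᵢ[ℝ] EuclideanSpace ℝ (Fin 2),
      Measure.map T μ = μ) :
    ∃ g : EuclideanSpace ℝ (Fin 2) → ℂ,
      Continuous g ∧ (∃ C : ℝ, ∀ x, ‖g x‖ ≤ C) ∧
      ∃ η : EuclideanSpace ℝ (Fin 2) → ℂ,
        (∀ x : EuclideanSpace ℝ (Fin 2),
          Tendsto
            (fun R : ℝ =>
              (∫ y in Metric.closedBall (0 : EuclideanSpace ℝ (Fin 2)) R,
                  g y * (starRingEnd ℂ) (g (y - x))) /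
                ((Real.pi * R ^ 2 : ℝ) : ℂ))
            atTop (𝓝 (η x))) ∧
        (∀ φ : SchwartzMap (EuclideanSpace ℝ (Fin 2)) ℂ,
          ∫ x, η x * 𝓕 (⇑φ) x = ∫ y, φ y ∂μ) := by
  exact ⟨Strungaru.gfun r, Strungaru.gfun_cont r,
    ⟨1, fun x => le_of_eq (Strungaru.gfun_norm r x)⟩,
    Strungaru.eta r, fun x => Strungaru.tendsto_main r hr x,
    fun φ => Strungaru.fourier_pairing r hr μ hsupp hrot φ⟩
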